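/- Assume Conditions (C). Fix f = f_n = o(n^{1/3}), an index 1 ≤ i, and let w^{(i)}_k = min(w_k, ℓ_n^{1/3}/(i·√f)) be the truncated weights. Then for any positions 1 ≤ u ≤ w ≤ n in the size-biased random order without replacement and any x ≥ 0, the truncated weights are stochastically decreasing along the order: P( w^{(i)}_{v(w)} ≥ x ) ≤ P( w^{(i)}_{v(u)} ≥ x ). -/

import Mathlib

open MeasureTheory Filter Asymptotics
open scoped Classical ENNReal Topology

noncomputable section

/-- `ℓ_n`: the total weight. -/
def ell (w : ∀ n : ℕ, Fin n → ℝ) (n : ℕ) : ℝ := ∑ i, w n i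

/-- Conditions (C) on the triangular array of weights, relative to the law `μ` of the
limiting random variable `W`. -/
structure CondC (w : ∀ n : ℕ, Fin n → ℝ) (μ : Measure ℝ) : Prop where
  isProb : IsProbabilityMeasure μ
  pos : ∀ᵐ x ∂μ, 0 < x
  w_pos : ∀ n, ∀ i : Fin n, 0 < w n i
  w_anti : ∀ n, ∀ i j : Fin n, i ≤ j → w n j ≤ w n i
  int3 : Integrable (fun x => x ^ 3) μ
  moment_eq : ∫ x, x ^ 2 ∂μ = ∫ x, x ∂μ
  weak : ∀ g : BoundedContinuousFunction ℝ ℝ,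
    Tendsto (fun n : ℕ => (∑ i : Fin n, g (w n i)) / (n : ℝ)) atTop (𝓝 (∫ x, g x ∂μ))
  ell_asymp : (fun n : ℕ => ell w n - (∫ x, x ∂μ) * (n : ℝ)) =o[atTop]
      fun n : ℕ => (n : ℝ) ^ ((2 : ℝ) / 3)
  sq_asymp : (fun n : ℕ => (∑ i : Fin n, (w n i) ^ 2) - (∫ x, x ^ 2 ∂μ) * (n : ℝ)) =o[atTop]
      fun n : ℕ => (n : ℝ) ^ ((2 : ℝ) / 3)
  cube_asymp : (fun n : ℕ => (∑ i : Fin n, (w n i) ^ 3) - (∫ x, x ^ 3 ∂μ) * (n : ℝ)) =o[atTop]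
      fun _ : ℕ => (1 : ℝ)
  max_asymp : (fun n : ℕ => ⨆ i : Fin n, w n i) =o[atTop] fun n : ℕ => (n : ℝ) ^ ((1 : ℝ) / 3)

/-- The constant `C = E[W³]/E[W]`. -/
def Cconst (μ : Measure ℝ) : ℝ := (∫ x, x ^ 3 ∂μ) / (∫ x, x ∂μ)

/-- The critical percolation parameter `p_f = (ℓ_n^{1/3} + f_n)/ℓ_n^{4/3}`. -/
def pf (w : ∀ n : ℕ, Fin n → ℝ) (f : ℕ → ℝ) (n : ℕ) : ℝ :=
  (ell w n ^ ((1 : ℝ) / 3) + f n) / ell w n ^ ((4 : ℝ) / 3)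

/-- A Bernoulli-type measure on `Bool` with parameter `p`. -/
def bern (p : ℝ) : Measure Bool :=
  ENNReal.ofReal (1 - p) • Measure.dirac false + ENNReal.ofReal p • Measure.dirac true

/-- The law of the independent edge indicators of the rank-1 inhomogeneous random graph
`G(W,p)`: the indicator attached to the (ordered) pair `(i,j)` is Bernoulli with success
probability `1 - exp (- w i * w j * p)`, all independent. -/
def graphMeasure (n : ℕ) (wn : Fin n → ℝ) (p : ℝ) : Measure (Fin n → Fin n → Bool) :=
  Measure.pi fun i => Measure.pi fun j => bern (1 - Real.exp (-(wn i * wn j * p)))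

/-- The simple graph built from a sample of edge indicators: `i ~ j` iff `i ≠ j` and the
indicator of the pair `(min i j, max i j)` is `true`. -/
def graphOf {n : ℕ} (ω : Fin n → Fin n → Bool) : SimpleGraph (Fin n) :=
  SimpleGraph.fromRel fun i j => ω (min i j) (max i j) = true

/-- The size (number of vertices) of a connected component. -/
def csize {n : ℕ} (G : SimpleGraph (Fin n)) (c : G.ConnectedComponent) : ℕ :=
  Nat.card {v : Fin n // G.connectedComponentMk v = c}

/-- The weight of a connected component: sum of the weights of its vertices. -/
def cweight {n : ℕ} (wn : Fin n → ℝ) (G : SimpleGraph (Fin n)) (c : G.ConnectedComponent) : ℝ :=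
  ∑ v : Fin n, if G.connectedComponentMk v = c then wn v else 0

/-- The number of edges of a connected component. -/
def cedges {n : ℕ} (G : SimpleGraph (Fin n)) (c : G.ConnectedComponent) : ℕ :=
  Nat.card {e : Sym2 (Fin n) // e ∈ G.edgeSet ∧ ∀ v ∈ e, G.connectedComponentMk v = c}

/-- The surplus (excess) of a connected component: edges − vertices + 1. -/
def csurplus {n : ℕ} (G : SimpleGraph (Fin n)) (c : G.ConnectedComponent) : ℤ :=
  (cedges G c : ℤ) - (csize G c : ℤ) + 1

/-- `c` is a largest connected component. -/
def isLargest {n : ℕ} (G : SimpleGraph (Fin n)) (c : G.ConnectedComponent) : Prop :=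
  ∀ c', csize G c' ≤ csize G c

/-- The finset of connected components of a graph on `Fin n`. -/
def comps {n : ℕ} (G : SimpleGraph (Fin n)) : Finset G.ConnectedComponent :=
  Finset.univ.image G.connectedComponentMk

/-- The law of the size-biased random order without replacement `(v(1),…,v(n))`, seen as a
measure on functions `Fin n → Fin n` (supported on permutations `σ`, with
`P(v = σ) = ∏_i w (σ i) / (ℓ_n − ∑_{k<i} w (σ k))`). -/
def sbMeasure (n : ℕ) (wn : Fin n → ℝ) : Measure (Fin n → Fin n) :=
  Measure.sum fun σ : Equiv.Perm (Fin n) =>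
    ENNReal.ofReal (∏ i : Fin n,
        wn (σ i) / ((∑ k, wn k) - ∑ k ∈ Finset.univ.filter fun k => k < i, wn (σ k))) •
      Measure.dirac ⇑σ

/-- The joint law of (edge indicators of `G(W,p)`, size-biased order), the two being
independent. -/
def expMeasure' (n : ℕ) (wn : Fin n → ℝ) (p : ℝ) :
    Measure ((Fin n → Fin n → Bool) × (Fin n → Fin n)) :=
  Measure.sum fun σ : Equiv.Perm (Fin n) =>
    ENNReal.ofReal (∏ i : Fin n,
        wn (σ i) / ((∑ k, wn k) - ∑ k ∈ Finset.univ.filter fun k => k < i, wn (σ k))) •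
      (graphMeasure n wn p).map fun g => (g, ⇑σ)

/-- `sbW wn vord k` is `w_{v(k)}` (1-based), with the conventions `w_{v(0)} = 0` and
`w_{v(k)} = 0` for `k > n`. -/
def sbW {n : ℕ} (wn : Fin n → ℝ) (vord : Fin n → Fin n) (k : ℕ) : ℝ :=
  if h : k - 1 < n then (if k = 0 then 0 else wn (vord ⟨k - 1, h⟩)) else 0

/-- The (0-based) first position, in the order `vord`, of a vertex of the component `c`;
this governs the order in which components are discovered by the breadth-first walk. -/
def firstIdx {n : ℕ} (G : SimpleGraph (Fin n)) (vord : Fin n → Fin n)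
    (c : G.ConnectedComponent) : ℕ :=
  sInf {i : ℕ | ∃ h : i < n, G.connectedComponentMk (vord ⟨i, h⟩) = c}

/-- The number of vertices explored strictly before the exploration of the component `c`
starts: components are explored in the order of their first appearance in `vord`, and the
exploration of `c` occupies the steps `startT c + 1, …, startT c + csize c`. -/
def startT {n : ℕ} (G : SimpleGraph (Fin n)) (vord : Fin n → Fin n)
    (c : G.ConnectedComponent) : ℕ :=
  ∑ v : Fin n, if firstIdx G vord (G.connectedComponentMk v) < firstIdx G vord c then 1 else 0

/-- The state (explored vertices, queue of discovered-but-unexplored vertices) of the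
breadth-first walk after `i` steps; roots are chosen as the first undiscovered vertex in the
order `vord`, and children are queued in the order `vord`. -/
def bfwQueue {n : ℕ} (G : SimpleGraph (Fin n)) (vord : Fin n → Fin n) :
    ℕ → Finset (Fin n) × List (Fin n)
  | 0 => (∅, [])
  | i + 1 =>
    let s := bfwQueue G vord i
    let q : List (Fin n) :=
      if s.2.isEmpty then ((List.ofFn vord).filter fun v => decide (v ∉ s.1)).take 1 else s.2
    match q with
    | [] => (s.1, [])
    | v :: rest =>
      (insert v s.1,
        rest ++ (List.ofFn vord).filter fun u => decide (G.Adj v u ∧ u ∉ s.1 ∧ u ∉ q))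

/-- The reflected exploration process `L` of the breadth-first walk:
`L_0 = 1`, `L_{i+1} = max (L_i + c(i+1) - 1) 1`. -/
def Lproc {n : ℕ} (G : SimpleGraph (Fin n)) (vord : Fin n → Fin n) (i : ℕ) : ℕ :=
  max (bfwQueue G vord i).2.length 1

/-- `discNbrs G vord i` is the number of neighbours of `v(i+1)` (0-based: `vord i`) outside
`{v(1),…,v(i+1)}`, i.e. the increment `X⁰_{i+1} + 1` of the process `L⁰`. -/
def discNbrs {n : ℕ} (G : SimpleGraph (Fin n)) (vord : Fin n → Fin n) (i : ℕ) : ℕ :=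
  Nat.card {j : Fin n // (∃ h : i < n, G.Adj (vord ⟨i, h⟩) j) ∧
    ∀ k : ℕ, ∀ hk : k < n, k ≤ i → vord ⟨k, hk⟩ ≠ j}

/-- The process `L⁰`: `L⁰_0 = 1`, `L⁰_{i+1} = L⁰_i + X⁰_{i+1}` where
`X⁰_{i+1} = ∑_{j ∉ {v(1),…,v(i+1)}} Y(v(i+1), j) − 1`. -/
def L0 {n : ℕ} (G : SimpleGraph (Fin n)) (vord : Fin n → Fin n) (m : ℕ) : ℤ :=
  1 - (m : ℤ) + ∑ i ∈ Finset.range m, (discNbrs G vord i : ℤ)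

/-- The deterministic-drift process `L̃^h`, defined by
`L̃^h_m + m − 1 = ∑_{i=1}^m ∑_{k > i+h} (1 − exp (−w_{v(i)} w_{v(k)} p))`,
the inner sum being over positions `k ≤ n` in the size-biased order. -/
def Ltilde {n : ℕ} (wn : Fin n → ℝ) (p : ℝ) (vord : Fin n → Fin n) (h m : ℕ) : ℝ :=
  1 - (m : ℝ) + ∑ i ∈ Finset.range m,
    if hi : i < n then
      ∑ k : Fin n, if i + h < (k : ℕ) then
        1 - Real.exp (-(wn (vord ⟨i, hi⟩) * wn (vord k) * p)) else 0
    else 0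

/-- The law of the independent exponential clocks `(T_k)_{k ≤ n}`, `T_k` of rate `w_k / ℓ_n`. -/
def clocksMeasure (n : ℕ) (wn : Fin n → ℝ) : Measure (Fin n → ℝ) :=
  Measure.pi fun k => ProbabilityTheory.expMeasure (wn k / ∑ i, wn i)

/-- `N(x)`: the number of clocks that have rung by time `x`. -/
def Nclock {n : ℕ} (x : ℝ) (ω : Fin n → ℝ) : ℕ :=
  ∑ k : Fin n, if ω k ≤ x then 1 else 0

/-- `X(x)`: the total weight of the clocks that have rung by time `x`. -/
def Xclock {n : ℕ} (wn : Fin n → ℝ) (x : ℝ) (ω : Fin n → ℝ) : ℝ :=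
  ∑ k : Fin n, if ω k ≤ x then wn k else 0

/-- Conditions (C2) on a pair of sequences `(a, b)`, relative to the constant `Ā`. -/
structure Cond2 (w : ∀ n : ℕ, Fin n → ℝ) (Abar : ℝ) (a b : ℕ → ℝ) : Prop where
  exp_lt : ∀ᶠ n : ℕ in atTop,
    Real.exp (-(b n) ^ 2 / (Abar * (b n * (n : ℝ) ^ ((1 : ℝ) / 3) + a n))) < 1 / 4
  a_top : Tendsto a atTop atTop
  b_top : Tendsto b atTop atTop
  a_lito : a =o[atTop] fun n : ℕ => (n : ℝ)
  b_bigO : b =O[atTop] a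
  a_bigO : a =O[atTop] fun n => b n * ell w n ^ ((1 : ℝ) / 3)
  a_sq_bigO : (fun n => a n ^ 2) =O[atTop] fun n => b n * ell w n

/-- Conditions (C3) on a quadruple of sequences `(a, b, c, d)`. -/
structure Cond3 (w : ∀ n : ℕ, Fin n → ℝ) (Abar : ℝ) (a b c d : ℕ → ℝ) : Prop where
  sum_lito : (fun n => a n + c n) =o[atTop] fun n : ℕ => (n : ℝ)
  diff_top : Tendsto (fun n => a n - b n) atTop atTop
  d_bigO : d =O[atTop] fun n => a n - b n
  c2 : Cond2 w Abar (fun n => Real.sqrt ((a n - b n) * (a n + c n))) d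

/-- The list of component sizes, sorted in decreasing order. -/
def sizesList {n : ℕ} (G : SimpleGraph (Fin n)) : List ℕ :=
  (((comps G).val.map fun c => csize G c).sort (· ≤ ·)).reverse

/-- `kthSize G k` is the size of the `(k+1)`-st largest connected component of `G`
(`0` if there is no such component). -/
def kthSize {n : ℕ} (G : SimpleGraph (Fin n)) (k : ℕ) : ℕ := (sizesList G).getD k 0

end


section AuxSB

variable {n : ℕ}

private lemma sum_swap_le (wn : Fin n → ℝ)
    (σ : Equiv.Perm (Fin n)) (a b : Fin n) (hab : (a : ℕ) + 1 = (b : ℕ))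
    (hle : wn (σ b) ≤ wn (σ a)) (i : Fin n) :
    ∑ k ∈ Finset.univ.filter (fun k => k < i), wn (σ (Equiv.swap a b k)) ≤
      ∑ k ∈ Finset.univ.filter (fun k => k < i), wn (σ k) := by
  by_cases hib : i = b
  · rw [hib]
    have ha : a ∈ Finset.univ.filter (fun k => k < b) := by
      simp only [Finset.mem_filter, Finset.mem_univ, true_and, Fin.lt_def]; omega
    rw [← Finset.add_sum_erase _ _ ha, ← Finset.add_sum_erase _ (fun k => wn (σ k)) ha]
    have hcong : ∀ k ∈ (Finset.univ.filter (fun k => k < b)).erase a,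
        wn (σ (Equiv.swap a b k)) = wn (σ k) := by
      intro k hk
      rw [Finset.mem_erase, Finset.mem_filter] at hk
      have hkb : k ≠ b := ne_of_lt hk.2.2
      rw [Equiv.swap_apply_of_ne_of_ne hk.1 hkb]
    rw [Finset.sum_congr rfl hcong, Equiv.swap_apply_left]
    exact add_le_add_left hle _
  · refine le_of_eq (Finset.sum_equiv (Equiv.swap a b) ?_ ?_)
    · intro k
      have hiv : (i : ℕ) ≠ (b : ℕ) := fun h => hib (Fin.ext h)
      by_cases hka : k = a
      · subst hka
        rw [Equiv.swap_apply_left]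
        simp only [Finset.mem_filter, Finset.mem_univ, true_and, Fin.lt_def]
        omega
      · by_cases hkb : k = b
        · subst hkb
          rw [Equiv.swap_apply_right]
          simp only [Finset.mem_filter, Finset.mem_univ, true_and, Fin.lt_def]
          omega
        · rw [Equiv.swap_apply_of_ne_of_ne hka hkb]
    · intro k _; rfl

private lemma denom_eq (wn : Fin n → ℝ) (τ : Equiv.Perm (Fin n)) (i : Fin n) :
    (∑ k, wn k) - ∑ k ∈ Finset.univ.filter (fun k => k < i), wn (τ k)
      = ∑ k ∈ Finset.univ.filter (fun k => ¬ k < i), wn (τ k) := by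
  have h2 : ∑ k, wn k = ∑ k, wn (τ k) := (Equiv.sum_comp τ wn).symm
  have h := Finset.sum_filter_add_sum_filter_not Finset.univ (fun k => k < i)
    (fun k => wn (τ k))
  rw [h2]
  linarith

private lemma denom_pos (wn : Fin n → ℝ) (hw : ∀ i, 0 < wn i)
    (τ : Equiv.Perm (Fin n)) (i : Fin n) :
    0 < (∑ k, wn k) - ∑ k ∈ Finset.univ.filter (fun k => k < i), wn (τ k) := by
  rw [denom_eq]
  refine lt_of_lt_of_le (hw (τ i)) (Finset.single_le_sum (fun k _ => (hw (τ k)).le) ?_)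
  simp

private lemma prod_swap_le (wn : Fin n → ℝ) (hw : ∀ i, 0 < wn i)
    (σ : Equiv.Perm (Fin n)) (a b : Fin n) (hab : (a : ℕ) + 1 = (b : ℕ))
    (hle : wn (σ b) ≤ wn (σ a)) :
    (∏ i : Fin n, wn ((σ * Equiv.swap a b) i) /
        ((∑ k, wn k) - ∑ k ∈ Finset.univ.filter (fun k => k < i),
          wn ((σ * Equiv.swap a b) k))) ≤
      ∏ i : Fin n, wn (σ i) /
        ((∑ k, wn k) - ∑ k ∈ Finset.univ.filter (fun k => k < i), wn (σ k)) := by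
  rw [Finset.prod_div_distrib, Finset.prod_div_distrib]
  have hnum : ∏ k : Fin n, wn ((σ * Equiv.swap a b) k) = ∏ k : Fin n, wn (σ k) := by
    rw [Equiv.prod_comp (σ * Equiv.swap a b) wn, Equiv.prod_comp σ wn]
  rw [hnum]
  have hnum_nonneg : 0 ≤ ∏ k : Fin n, wn (σ k) :=
    Finset.prod_nonneg fun k _ => (hw (σ k)).le
  have hDpos : 0 < ∏ i : Fin n,
      ((∑ k, wn k) - ∑ k ∈ Finset.univ.filter (fun k => k < i), wn (σ k)) :=
    Finset.prod_pos fun i _ => denom_pos wn hw σ i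
  have hDle : (∏ i : Fin n,
      ((∑ k, wn k) - ∑ k ∈ Finset.univ.filter (fun k => k < i), wn (σ k))) ≤
      ∏ i : Fin n, ((∑ k, wn k) - ∑ k ∈ Finset.univ.filter (fun k => k < i),
        wn ((σ * Equiv.swap a b) k)) := by
    refine Finset.prod_le_prod (fun i _ => (denom_pos wn hw σ i).le) fun i _ => ?_
    refine sub_le_sub_left ?_ _
    simp only [Equiv.Perm.mul_apply]
    exact sum_swap_le wn σ a b hab hle i
  exact div_le_div_of_nonneg_left hnum_nonneg hDpos hDle

private lemma sbMeasure_apply' (wn : Fin n → ℝ) (S : Set (Fin n → Fin n)) :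
    sbMeasure n wn S = ∑ σ : Equiv.Perm (Fin n),
      if ⇑σ ∈ S then ENNReal.ofReal (∏ i : Fin n,
        wn (σ i) / ((∑ k, wn k) - ∑ k ∈ Finset.univ.filter fun k => k < i, wn (σ k)))
      else 0 := by
  have hS : MeasurableSet S := S.toFinite.measurableSet
  rw [sbMeasure, Measure.sum_apply _ hS, tsum_fintype]
  refine Finset.sum_congr rfl fun σ _ => ?_
  rw [Measure.smul_apply, Measure.dirac_apply' _ hS, smul_eq_mul]
  by_cases h : ⇑σ ∈ S <;> simp [Set.indicator_apply, h]

private lemma sb_step (u : ℕ) (hu : 1 ≤ u) (hun : u + 1 ≤ n)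
    (wn : Fin n → ℝ) (hw : ∀ i, 0 < wn i) (x c : ℝ) :
    sbMeasure n wn {ω : Fin n → Fin n | x ≤ min (sbW wn ω (u + 1)) c} ≤
      sbMeasure n wn {ω : Fin n → Fin n | x ≤ min (sbW wn ω u) c} := by
  set a : Fin n := ⟨u - 1, by omega⟩ with ha_def
  set b : Fin n := ⟨u, by omega⟩ with hb_def
  have hab : (a : ℕ) + 1 = (b : ℕ) := by simp only [ha_def, hb_def]; omega
  have hsbu : ∀ ω : Fin n → Fin n, sbW wn ω u = wn (ω a) := by
    intro ω
    rw [sbW, dif_pos (show u - 1 < n by omega), if_neg (by omega)]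
  have hsbv : ∀ ω : Fin n → Fin n, sbW wn ω (u + 1) = wn (ω b) := by
    intro ω
    rw [sbW, dif_pos (show u + 1 - 1 < n by omega), if_neg (by omega)]
    exact congrArg (fun t => wn (ω t)) (Fin.ext (show u + 1 - 1 = u by omega))
  rw [show {ω : Fin n → Fin n | x ≤ min (sbW wn ω (u + 1)) c}
        = {ω : Fin n → Fin n | x ≤ min (wn (ω b)) c} from Set.ext fun ω => by rw [Set.mem_setOf_eq, Set.mem_setOf_eq, hsbv],
      show {ω : Fin n → Fin n | x ≤ min (sbW wn ω u) c}
        = {ω : Fin n → Fin n | x ≤ min (wn (ω a)) c} from Set.ext fun ω => by rw [Set.mem_setOf_eq, Set.mem_setOf_eq, hsbu],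
      sbMeasure_apply', sbMeasure_apply']
  simp only [Set.mem_setOf_eq]
  set P : Equiv.Perm (Fin n) → ℝ≥0∞ := fun σ => ENNReal.ofReal (∏ i : Fin n,
      wn (σ i) / ((∑ k, wn k) - ∑ k ∈ Finset.univ.filter fun k => k < i, wn (σ k)))
    with hP
  set A : Equiv.Perm (Fin n) → Prop := fun σ => x ≤ min (wn (σ a)) c with hA
  set B : Equiv.Perm (Fin n) → Prop := fun σ => x ≤ min (wn (σ b)) c with hB
  have hmid : (∑ σ : Equiv.Perm (Fin n), if ¬ A σ ∧ B σ then P σ else 0)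
      ≤ ∑ σ : Equiv.Perm (Fin n), if A σ ∧ ¬ B σ then P σ else 0 := by
    have hre : (∑ σ : Equiv.Perm (Fin n), if ¬ A σ ∧ B σ then P σ else 0)
        = ∑ σ : Equiv.Perm (Fin n),
            if ¬ A (σ * Equiv.swap a b) ∧ B (σ * Equiv.swap a b)
            then P (σ * Equiv.swap a b) else 0 :=
      (Fintype.sum_equiv (Equiv.mulRight (Equiv.swap a b)) _ _ (fun σ => rfl)).symm
    rw [hre]
    refine Finset.sum_le_sum fun σ _ => ?_
    have h1 : (σ * Equiv.swap a b) a = σ b := by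
      rw [Equiv.Perm.mul_apply, Equiv.swap_apply_left]
    have h2 : (σ * Equiv.swap a b) b = σ a := by
      rw [Equiv.Perm.mul_apply, Equiv.swap_apply_right]
    have hAB : A (σ * Equiv.swap a b) ↔ B σ := by rw [hA, hB]; simp only [h1]
    have hBA : B (σ * Equiv.swap a b) ↔ A σ := by rw [hA, hB]; simp only [h2]
    by_cases hc : A σ ∧ ¬ B σ
    · rw [if_pos (show ¬ A (σ * Equiv.swap a b) ∧ B (σ * Equiv.swap a b) from
        ⟨fun h => hc.2 (hAB.mp h), hBA.mpr hc.1⟩), if_pos hc]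
      have hxa : x ≤ wn (σ a) := le_trans hc.1 (min_le_left _ _)
      have hxc : x ≤ c := le_trans hc.1 (min_le_right _ _)
      have hbx : wn (σ b) < x := by
        rcases min_lt_iff.mp (not_le.mp hc.2) with h | h
        · exact h
        · exact absurd hxc (not_le.mpr h)
      have hle : wn (σ b) ≤ wn (σ a) := le_of_lt (lt_of_lt_of_le hbx hxa)
      simp only [hP]
      exact ENNReal.ofReal_le_ofReal (prod_swap_le wn hw σ a b hab hle)
    · rw [if_neg (fun h => hc ⟨hBA.mp h.2, fun hb => h.1 (hAB.mpr hb)⟩), if_neg hc]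
  calc (∑ σ : Equiv.Perm (Fin n), if B σ then P σ else 0)
      = ∑ σ : Equiv.Perm (Fin n),
          ((if A σ ∧ B σ then P σ else 0) + (if ¬ A σ ∧ B σ then P σ else 0)) := by
        refine Finset.sum_congr rfl fun σ _ => ?_
        by_cases hA' : A σ <;> by_cases hB' : B σ <;> simp [hA', hB']
    _ = (∑ σ : Equiv.Perm (Fin n), if A σ ∧ B σ then P σ else 0)
        + ∑ σ : Equiv.Perm (Fin n), if ¬ A σ ∧ B σ then P σ else 0 :=
        Finset.sum_add_distrib
    _ ≤ (∑ σ : Equiv.Perm (Fin n), if A σ ∧ B σ then P σ else 0)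
        + ∑ σ : Equiv.Perm (Fin n), if A σ ∧ ¬ B σ then P σ else 0 :=
        add_le_add_right hmid _
    _ = ∑ σ : Equiv.Perm (Fin n),
          ((if A σ ∧ B σ then P σ else 0) + (if A σ ∧ ¬ B σ then P σ else 0)) :=
        Finset.sum_add_distrib.symm
    _ = ∑ σ : Equiv.Perm (Fin n), if A σ then P σ else 0 := by
        refine Finset.sum_congr rfl fun σ _ => ?_
        by_cases hA' : A σ <;> by_cases hB' : B σ <;> simp [hA', hB']

end AuxSB

/-- Lemma of the paper: the truncated weights are stochastically
decreasing along the size-biased random order. -/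
theorem truncated_weights_stochastically_decreasing
    (w : ∀ n : ℕ, Fin n → ℝ) (μ : Measure ℝ) (hC : CondC w μ)
    (f : ℕ → ℝ) (hf : f =o[atTop] fun n : ℕ => (n : ℝ) ^ ((1 : ℝ) / 3))
    (i : ℕ) (hi : 1 ≤ i) :
    ∀ n : ℕ, ∀ u v : ℕ, 1 ≤ u → u ≤ v → v ≤ n → ∀ x : ℝ, 0 ≤ x →
      sbMeasure n (w n)
          {ω : Fin n → Fin n |
            x ≤ min (sbW (w n) ω v) (ell w n ^ ((1 : ℝ) / 3) / ((i : ℝ) * Real.sqrt (f n)))}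
        ≤ sbMeasure n (w n)
          {ω : Fin n → Fin n |
            x ≤ min (sbW (w n) ω u) (ell w n ^ ((1 : ℝ) / 3) / ((i : ℝ) * Real.sqrt (f n)))} := by
  intro n u v hu huv hvn x hx
  revert hvn
  induction v, huv using Nat.le_induction with
  | base => intro _; exact le_rfl
  | succ v hv ih =>
      intro hvn
      exact le_trans
        (sb_step v (le_trans hu hv) hvn (w n) (hC.w_pos n) x _)
        (ih (by omega))
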